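/- Let n ≥ 3 and m ≥ 2 be integers. Then the set Z consisting of all pendant vertices of the jellyfish graph JFG(n, m) except the single pendant vertex v_{nm} (so |Z| = nm − 1) is not a doubly resolving set of JFG(n, m): the pair u = v_{nm} and v = n satisfies d(u, x) − d(u, y) = d(v, x) − d(v, y) for all x, y ∈ Z. -/

import Mathlib

open SimpleGraph

/-- Vertex type of the jellyfish graph `JFG(n, m)`: cycle vertices (left) and
pendant vertices (right, a cycle vertex together with a pendant index). -/
abbrev JVert (n m : ℕ) := (ZMod n) ⊕ ((ZMod n) × Fin m)

/-- The jellyfish graph `JFG(n, m)`: the cycle `C_n` together with `m` pendant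
vertices attached to each cycle vertex. -/
def jellyfish (n m : ℕ) : SimpleGraph (JVert n m) where
  Adj u v :=
    match u, v with
    | Sum.inl i, Sum.inl j => i ≠ j ∧ (i - j = 1 ∨ j - i = 1)
    | Sum.inl i, Sum.inr p => p.1 = i
    | Sum.inr p, Sum.inl i => p.1 = i
    | Sum.inr _, Sum.inr _ => False
  symm := by
    constructor
    rintro (i | p) (j | q) h
    · exact ⟨h.1.symm, h.2.symm⟩
    · exact h
    · exact h
    · exact h
  loopless := by
    constructor
    rintro (i | p) h
    · exact h.1 rfl
    · exact h


/-- Vertices `x, y` doubly resolve `u, v` if `d(u,x) - d(u,y) ≠ d(v,x) - d(v,y)`;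
`Z` is a doubly resolving set if every two distinct vertices are doubly resolved
by some two vertices of `Z`. -/
def IsDoublyResolving {V : Type*} (G : SimpleGraph V) (Z : Set V) : Prop :=
  ∀ u v : V, u ≠ v → ∃ x ∈ Z, ∃ y ∈ Z,
    (G.dist u x : ℤ) - (G.dist u y : ℤ) ≠ (G.dist v x : ℤ) - (G.dist v y : ℤ)


lemma jellyfish_reach_cycle (n m : ℕ) (hn : 3 ≤ n) (i j : ZMod n) :
    (jellyfish n m).Reachable (Sum.inl i) (Sum.inl j) := by
  haveI : NeZero n := ⟨by omega⟩
  have h1 : (1 : ZMod n) ≠ 0 := by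
    haveI : Fact (1 < n) := ⟨by omega⟩
    exact one_ne_zero
  have key : ∀ k : ℕ, (jellyfish n m).Reachable (Sum.inl i) (Sum.inl (i + k)) := by
    intro k
    induction k with
    | zero =>
      simp only [Nat.cast_zero, add_zero]
      exact SimpleGraph.Reachable.refl _
    | succ k ih =>
      refine ih.trans (SimpleGraph.Adj.reachable ?_)
      constructor
      · intro h
        have : (i + (k+1) : ZMod n) - (i + k) = 0 := by
          push_cast at h ⊢; rw [← h]; ring
        rw [show (i + ((k:ℕ)+1) : ZMod n) - (i + k) = 1 by push_cast; ring] at this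
        exact h1 this
      · right
        push_cast
        ring
  have := key ((j - i).val)
  rwa [ZMod.natCast_val, ZMod.cast_id, add_sub_cancel] at this

lemma jellyfish_reach (n m : ℕ) (hn : 3 ≤ n) (i : ZMod n) (p : ZMod n × Fin m) :
    (jellyfish n m).Reachable (Sum.inl i) (Sum.inr p) := by
  refine (jellyfish_reach_cycle n m hn i p.1).trans (SimpleGraph.Adj.reachable ?_)
  show p.1 = p.1
  rfl

lemma jellyfish_dist_pendant (n m : ℕ) (hn : 3 ≤ n) (q : ZMod n × Fin m)
    (x : JVert n m) (hx : x ≠ Sum.inr q) :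
    (jellyfish n m).dist (Sum.inr q) x = (jellyfish n m).dist (Sum.inl q.1) x + 1 := by
  have hadj : (jellyfish n m).Adj (Sum.inr q) (Sum.inl q.1) := rfl
  -- reachability from inl q.1 to x
  have hreach : (jellyfish n m).Reachable (Sum.inl q.1) x := by
    cases x with
    | inl j => exact jellyfish_reach_cycle n m hn q.1 j
    | inr p => exact jellyfish_reach n m hn q.1 p
  apply le_antisymm
  · obtain ⟨w, hw⟩ := hreach.exists_walk_length_eq_dist
    have := SimpleGraph.dist_le (SimpleGraph.Walk.cons hadj w)
    simpa [hw, Nat.add_comm] using this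
  · have hr2 : (jellyfish n m).Reachable (Sum.inr q) x :=
      hadj.reachable.trans hreach
    obtain ⟨w, hw⟩ := hr2.exists_walk_length_eq_dist
    cases w with
    | nil => exact absurd rfl hx.symm
    | cons h p =>
      rename_i b
      have hb : b = Sum.inl q.1 := by
        cases b with
        | inl j =>
          have : q.1 = j := h
          rw [this]
        | inr r => exact absurd h (by simp [jellyfish])
      subst hb
      have := SimpleGraph.dist_le p
      simp only [SimpleGraph.Walk.length_cons] at hw
      omega

theorem jellyfish_pendants_minus_last_not_doubly_resolving (n m : ℕ) (hn : 3 ≤ n) (hm : 2 ≤ m) :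
    ¬ IsDoublyResolving (jellyfish n m)
      (Set.range (Sum.inr : ZMod n × Fin m → JVert n m) \
        {Sum.inr ((n : ZMod n), (⟨m - 1, by omega⟩ : Fin m))}) ∧
    ∀ x ∈ Set.range (Sum.inr : ZMod n × Fin m → JVert n m) \
        {Sum.inr ((n : ZMod n), (⟨m - 1, by omega⟩ : Fin m))},
      ∀ y ∈ Set.range (Sum.inr : ZMod n × Fin m → JVert n m) \
        {Sum.inr ((n : ZMod n), (⟨m - 1, by omega⟩ : Fin m))},
      ((jellyfish n m).dist (Sum.inr ((n : ZMod n), (⟨m - 1, by omega⟩ : Fin m))) x : ℤ) -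
          ((jellyfish n m).dist (Sum.inr ((n : ZMod n), (⟨m - 1, by omega⟩ : Fin m))) y : ℤ) =
        ((jellyfish n m).dist (Sum.inl (n : ZMod n)) x : ℤ) -
          ((jellyfish n m).dist (Sum.inl (n : ZMod n)) y : ℤ) := by
  set u : JVert n m := Sum.inr ((n : ZMod n), (⟨m - 1, by omega⟩ : Fin m)) with hu
  have main : ∀ x ∈ Set.range (Sum.inr : ZMod n × Fin m → JVert n m) \ {u},
      ((jellyfish n m).dist u x : ℤ) = (jellyfish n m).dist (Sum.inl (n : ZMod n)) x + 1 := by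
    rintro x ⟨⟨p, rfl⟩, hxu⟩
    have := jellyfish_dist_pendant n m hn ((n : ZMod n), (⟨m - 1, by omega⟩ : Fin m))
      (Sum.inr p) (by simpa [hu, eq_comm] using hxu)
    rw [hu, this]
    push_cast
    ring
  constructor
  · intro hdr
    obtain ⟨x, hx, y, hy, hne⟩ := hdr u (Sum.inl (n : ZMod n)) (by simp [hu])
    apply hne
    rw [main x hx, main y hy]
    ring
  · intro x hx y hy
    rw [main x hx, main y hy]
    ring
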